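/- Let K ≥ 1, p ∈ (0,1), p_D ∈ (0,1), and φ⁺, φ⁻ ∈ ℝ^K with nonneg entries summing to 1 each and c₁ ≠ 0 where c = (1−p)φ⁺ + pφ⁻. Define b = p(1−p)·((1−p_D)/p_D)·(φ⁺ − φ⁻) and f(u,v) = (p_D/(p(1−p)))·(v − p·u) + φ⁺·(1 − p_D·(1ᵀv)/p) − φ⁻·(1 − p_D·(1 − 1ᵀv)/(1−p)) for u, v ∈ ℝ^K with 1ᵀu = 1. Then f(u,v) = 0 if and only if v = p·u − b + λ·c for some λ ∈ ℝ; moreover in that case necessarily λ = 1ᵀv − p. -/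
import Mathlib


open scoped BigOperators

/-- solutions of `f(u,v) = 0` are exactly `v = p·u - b + λ·c`, and then
`λ = 1ᵀv - p`. -/
theorem stmt_9 {K : ℕ} (hK : 0 < K) (p pD : ℝ)
    (hp : p ∈ Set.Ioo (0:ℝ) 1) (hpD : pD ∈ Set.Ioo (0:ℝ) 1)
    (phip phim : Fin K → ℝ)
    (hphip0 : ∀ i, 0 ≤ phip i) (hphim0 : ∀ i, 0 ≤ phim i)
    (h1 : ∑ i, phip i = 1) (h2 : ∑ i, phim i = 1)
    (c b : Fin K → ℝ)
    (hc : c = (1 - p) • phip + p • phim)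
    (hc1 : c ⟨0, hK⟩ ≠ 0)
    (hb : b = (p * (1 - p) * ((1 - pD) / pD)) • (phip - phim))
    (f : (Fin K → ℝ) → (Fin K → ℝ) → (Fin K → ℝ))
    (hf : ∀ u v, f u v = (pD / (p * (1 - p))) • (v - p • u)
        + (1 - pD * (∑ i, v i) / p) • phip
        - (1 - pD * (1 - ∑ i, v i) / (1 - p)) • phim)
    (u v : Fin K → ℝ) (hu : ∑ i, u i = 1) :
    (f u v = 0 ↔ ∃ t : ℝ, v = p • u - b + t • c) ∧
    (f u v = 0 → ∀ t : ℝ, v = p • u - b + t • c → t = (∑ i, v i) - p) := by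
  obtain ⟨hp0, hp1⟩ := hp
  obtain ⟨hpD0, hpD1⟩ := hpD
  have hpne : p ≠ 0 := ne_of_gt hp0
  have hp1ne : (1 : ℝ) - p ≠ 0 := by linarith
  have hpDne : pD ≠ 0 := ne_of_gt hpD0
  have hαne : pD / (p * (1 - p)) ≠ 0 := by
    exact div_ne_zero hpDne (mul_ne_zero hpne hp1ne)
  -- key identity
  have key : f u v = (pD / (p * (1 - p))) •
      (v - (p • u - b + ((∑ i, v i) - p) • c)) := by
    rw [hf]
    funext i
    simp only [hb, hc, Pi.add_apply, Pi.sub_apply, Pi.smul_apply, smul_eq_mul]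
    field_simp
    ring
  -- sums
  have hsb : ∑ i, b i = 0 := by
    simp only [hb, Pi.smul_apply, Pi.sub_apply, smul_eq_mul]
    rw [← Finset.mul_sum, Finset.sum_sub_distrib, h1, h2]
    ring
  have hsc : ∑ i, c i = 1 := by
    simp only [hc, Pi.add_apply, Pi.smul_apply, smul_eq_mul]
    rw [Finset.sum_add_distrib, ← Finset.mul_sum, ← Finset.mul_sum, h1, h2]
    ring
  have hsum : ∀ t : ℝ, v = p • u - b + t • c → t = (∑ i, v i) - p := by
    intro t hv
    have : ∑ i, v i = p * (∑ i, u i) - (∑ i, b i) + t * (∑ i, c i) := by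
      rw [hv]
      simp only [Pi.add_apply, Pi.sub_apply, Pi.smul_apply, smul_eq_mul]
      rw [Finset.sum_add_distrib, Finset.sum_sub_distrib, ← Finset.mul_sum,
        ← Finset.mul_sum]
    rw [hu, hsb, hsc] at this
    linarith
  constructor
  · constructor
    · intro h0
      refine ⟨(∑ i, v i) - p, ?_⟩
      rw [key] at h0
      rcases smul_eq_zero.mp h0 with h | h
      · exact absurd h hαne
      · exact sub_eq_zero.mp h
    · rintro ⟨t, hv⟩
      have ht := hsum t hv
      rw [key, ← ht, ← hv, sub_self, smul_zero]
  · intro _ t hv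
    exact hsum t hv
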